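/- Fix κ > 0 and ρ ∈ ℝ, and define ν(x) = x^{-(3κ - 2ρ - 4)/(2κ)} · exp(-4/(κx)) for x > 0, p(x) = (κ/2)x², and q(x) = 2 + ((κ + 2ρ + 4)/4)x. Then for every twice continuously differentiable function f : ℝ → ℝ whose support is a compact subset of (0, ∞), one has ∫_0^∞ [p(x)·f''(x) + q(x)·f'(x)]·ν(x) dx = 0. -/

import Mathlib

open MeasureTheory

/-- For the stationary density `ν(x) = x^{-(3κ-2ρ-4)/(2κ)} e^{-4/(κx)}` of the stopped
capacity of SLE_κ(ρ), the expectation of the generator `p f'' + q f'` against `ν`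
vanishes for every `C²` test function `f` compactly supported in `(0, ∞)`, where
`p(x) = (κ/2)x²` and `q(x) = 2 + ((κ+2ρ+4)/4)x`. -/
theorem stationary_density_annihilates_generator
    (κ ρ : ℝ) (hκ : 0 < κ) (ν p q : ℝ → ℝ)
    (hν : ∀ x : ℝ, ν x = x ^ (-((3 * κ - 2 * ρ - 4) / (2 * κ))) * Real.exp (-4 / (κ * x)))
    (hp : ∀ x : ℝ, p x = (κ / 2) * x ^ 2)
    (hq : ∀ x : ℝ, q x = 2 + ((κ + 2 * ρ + 4) / 4) * x)
    (f : ℝ → ℝ) (hf : ContDiff ℝ 2 f) (hsupp : HasCompactSupport f)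
    (hsupp' : tsupport f ⊆ Set.Ioi (0 : ℝ)) :
    ∫ x in Set.Ioi (0 : ℝ), (p x * deriv (deriv f) x + q x * deriv f x) * ν x = 0 := by
  set α : ℝ := (3 * κ - 2 * ρ - 4) / (2 * κ) with hα
  -- the flux function G = p ν f'
  set G : ℝ → ℝ := fun y => (κ / 2 * y ^ 2 * (y ^ (-α) * Real.exp (-4 / (κ * y)))) * deriv f y
    with hG
  have h1 : ContDiff ℝ 1 (deriv f) := by
    rw [show (2 : WithTop ℕ∞) = 1 + 1 from rfl] at hf
    exact (contDiff_succ_iff_deriv.mp hf).2.2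
  have hder0 : ∀ y : ℝ, y ∉ tsupport f → deriv f y = 0 := by
    intro y hy
    by_contra h
    exact hy (support_deriv_subset h)
  -- derivative of G on (0, ∞)
  have key : ∀ x : ℝ, 0 < x →
      HasDerivAt G ((p x * deriv (deriv f) x + q x * deriv f x) * ν x) x := by
    intro x hx
    have hxne : x ≠ 0 := hx.ne'
    have hκx : κ * x ≠ 0 := (mul_pos hκ hx).ne'
    have hA : HasDerivAt (fun y : ℝ => y ^ (-α)) (-α * x ^ (-α - 1)) x :=
      Real.hasDerivAt_rpow_const (Or.inl hxne)
    have hlin : HasDerivAt (fun y : ℝ => κ * y) (κ * 1) x := (hasDerivAt_id x).const_mul κ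
    have hinner : HasDerivAt (fun y : ℝ => -4 / (κ * y))
        ((0 * (κ * x) - (-4) * (κ * 1)) / (κ * x) ^ 2) x :=
      (hasDerivAt_const x (-4)).div hlin hκx
    have hB : HasDerivAt (fun y : ℝ => Real.exp (-4 / (κ * y)))
        (Real.exp (-4 / (κ * x)) * ((0 * (κ * x) - (-4) * (κ * 1)) / (κ * x) ^ 2)) x :=
      hinner.exp
    have hC : HasDerivAt (fun y : ℝ => κ / 2 * y ^ 2) (κ / 2 * (↑2 * x ^ (2 - 1))) x :=
      (hasDerivAt_pow 2 x).const_mul (κ / 2)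
    have hF : HasDerivAt (deriv f) (deriv (deriv f) x) x :=
      ((h1.differentiable one_ne_zero) x).hasDerivAt
    have hc := hC.mul (hA.mul hB)
    have hGd := hc.mul hF
    convert hGd using 1
    case e'_4 => rfl
    case e'_5 => rfl
    case e'_8 => rfl
    simp only [Pi.mul_apply]
    have hpow : x ^ (-α - 1) = x ^ (-α) / x := by
      rw [show -α - 1 = -α - (1 : ℝ) from rfl, Real.rpow_sub hx, Real.rpow_one]
    rw [hp, hq, hν, hpow]
    generalize Real.exp (-4 / (κ * x)) = E
    generalize x ^ (-α) = R
    rw [hα]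
    field_simp
    ring
  -- G is C¹ on all of ℝ
  have hGc1 : ContDiff ℝ 1 G := by
    rw [contDiff_iff_contDiffAt]
    intro x
    by_cases hx : 0 < x
    · have hxne : x ≠ 0 := hx.ne'
      have hκx : (κ * x) ≠ 0 := (mul_pos hκ hx).ne'
      have cA : ContDiffAt ℝ 1 (fun y : ℝ => y ^ (-α)) x :=
        Real.contDiffAt_rpow_const_of_ne hxne
      have cB : ContDiffAt ℝ 1 (fun y : ℝ => Real.exp (-4 / (κ * y))) x := by
        have : ContDiffAt ℝ 1 (fun y : ℝ => -4 / (κ * y)) x :=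
          contDiffAt_const.div (contDiffAt_const.mul contDiffAt_id) hκx
        exact this.exp
      have cC : ContDiffAt ℝ 1 (fun y : ℝ => κ / 2 * y ^ 2) x :=
        contDiffAt_const.mul (contDiffAt_id.pow 2)
      exact (cC.mul (cA.mul cB)).mul h1.contDiffAt
    · have hxn : x ∉ tsupport f := fun h => hx (hsupp' h)
      have hmem : (tsupport f)ᶜ ∈ nhds x :=
        (isClosed_tsupport f).isOpen_compl.mem_nhds hxn
      have hEq : G =ᶠ[nhds x] fun _ => (0 : ℝ) := by
        filter_upwards [hmem] with y hy
        simp [hG, hder0 y hy]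
      exact contDiffAt_const.congr_of_eventuallyEq hEq
  -- G has compact support
  have hGsupp : HasCompactSupport G := (hsupp.deriv).mul_left
  -- rewrite the integrand as deriv G on (0, ∞)
  have hcongr : ∫ x in Set.Ioi (0 : ℝ), (p x * deriv (deriv f) x + q x * deriv f x) * ν x
      = ∫ x in Set.Ioi (0 : ℝ), deriv G x := by
    refine setIntegral_congr_fun measurableSet_Ioi fun x hx => ?_
    exact ((key x hx).deriv).symm
  rw [hcongr, HasCompactSupport.integral_Ioi_deriv_eq hGc1 hGsupp 0]
  have h0 : deriv f 0 = 0 := hder0 0 fun h => (lt_irrefl (0:ℝ)) (hsupp' h)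
  simp [hG, h0]
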